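/- Let A be a k-linear triangulated category of finite type and B ⊆ A a full triangulated subcategory that is saturated. Then B is right admissible in A: the inclusion B → A admits a right adjoint. -/

import Mathlib

/-!
STATEMENT 18: If `A` is a `k`-linear triangulated category of finite type and `B ⊆ A`
is a full triangulated subcategory (realized by a fully faithful triangulated functor
`j : B ⥤ A`) which is saturated, then `B` is right admissible in `A`: `j` admits a
right adjoint.
-/

open CategoryTheory CategoryTheory.Pretriangulated Opposite

universe v u u'

variable (k : Type v) [Field k]

section Defs

variable (D : Type u') [Category.{v} D] [Preadditive D] [Linear k D]
  [Limits.HasZeroObject D] [HasShift D ℤ] [∀ n : ℤ, (shiftFunctor D n).Additive]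
  [Pretriangulated D]

/-- A contravariant functor to `k`-vector spaces is cohomological if it sends
distinguished triangles to exact sequences. -/
def IsCohomological (F : Dᵒᵖ ⥤ ModuleCat.{v} k) : Prop :=
  ∀ T ∈ distTriang D, Function.Exact (F.map T.mor₂.op) (F.map T.mor₁.op)

/-- A functor is of finite type if `∑ₚ dim F(a⟦p⟧) < ∞` for every object `a`. -/
def FunctorFiniteType (F : Dᵒᵖ ⥤ ModuleCat.{v} k) : Prop :=
  ∀ a : D, {p : ℤ | Nontrivial (F.obj (op (a⟦p⟧)))}.Finite ∧
    ∀ p : ℤ, FiniteDimensional k (F.obj (op (a⟦p⟧)))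

/-- A functor `F : Dᵒᵖ ⥤ k-Vect` is representable if there is `b` with natural
`k`-linear isomorphisms `F(a) ≅ Hom(a, b)`. -/
def FunctorRepresentable (F : Dᵒᵖ ⥤ ModuleCat.{v} k) : Prop :=
  ∃ (b : D) (e : ∀ a : D, F.obj (op a) ≃ₗ[k] (a ⟶ b)),
    ∀ (a a' : D) (u : a' ⟶ a) (x : F.obj (op a)), e a' (F.map u.op x) = u ≫ e a x

/-- `D` is saturated: every cohomological functor of finite type is representable. -/
def SaturatedCat : Prop :=
  ∀ F : Dᵒᵖ ⥤ ModuleCat.{v} k, F.Additive → IsCohomological k D F →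
    FunctorFiniteType k D F → FunctorRepresentable k D F

end Defs

section Aux
set_option linter.unusedSectionVars false

variable {A : Type u} [Category.{v} A] [Preadditive A] [Linear k A]
  [Limits.HasZeroObject A] [HasShift A ℤ] [∀ n : ℤ, (shiftFunctor A n).Additive]
  [Pretriangulated A]
  {B : Type u'} [Category.{v} B] [Preadditive B] [Linear k B]
  [Limits.HasZeroObject B] [HasShift B ℤ] [∀ n : ℤ, (shiftFunctor B n).Additive]
  [Pretriangulated B]
  (j : B ⥤ A) [j.Full] [j.Faithful] [j.Additive] [j.Linear k]
  [j.CommShift ℤ] [j.IsTriangulated]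

/-- The functor `b ↦ Hom_A(j b, a)` as a functor `Bᵒᵖ ⥤ ModuleCat k`. -/
@[simps]
def homFunctor (a : A) : Bᵒᵖ ⥤ ModuleCat.{v} k where
  obj b := ModuleCat.of k (j.obj b.unop ⟶ a)
  map {b b'} u := ModuleCat.ofHom (Linear.leftComp k a (j.map u.unop))
  map_id b := by
    ext x
    show j.map (𝟙 (unop b)) ≫ x = x
    rw [CategoryTheory.Functor.map_id, Category.id_comp]
  map_comp {b b' b''} u v := by
    ext x
    show j.map (u ≫ v).unop ≫ x = j.map v.unop ≫ (j.map u.unop ≫ x)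
    rw [unop_comp, CategoryTheory.Functor.map_comp, Category.assoc]

instance homFunctor_additive (a : A) : (homFunctor k j a).Additive where
  map_add {b b'} {f g} := by
    ext x
    change j.obj b.unop ⟶ a at x
    show j.map (f + g).unop ≫ x = j.map f.unop ≫ x + j.map g.unop ≫ x
    rw [unop_add, j.map_add, Preadditive.add_comp]

lemma homFunctor_cohomological (a : A) :
    IsCohomological k B (homFunctor k j a) := by
  intro T hT g
  have hT' := j.map_distinguished T hT
  constructor
  · intro hg
    -- hg : (homFunctor ...).map T.mor₁.op g = 0, i.e. j.map T.mor₁ ≫ g = 0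
    obtain ⟨h, hh⟩ := Pretriangulated.Triangle.yoneda_exact₂ _ hT' g hg
    exact ⟨h, hh.symm⟩
  · rintro ⟨h, rfl⟩
    change j.obj T.obj₃ ⟶ a at h
    show j.map T.mor₁ ≫ (j.map T.mor₂ ≫ h) = 0
    rw [← Category.assoc]
    have : (j.mapTriangle.obj T).mor₁ ≫ (j.mapTriangle.obj T).mor₂ = 0 :=
      Pretriangulated.comp_distTriang_mor_zero₁₂ _ hT'
    change j.map T.mor₁ ≫ j.map T.mor₂ = 0 at this
    rw [this, Limits.zero_comp]

/-- Composition with the `shiftFunctorZero` isomorphism, as a linear equivalence. -/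
def homShiftZeroEquiv (x a : A) : (x ⟶ a⟦(0:ℤ)⟧) ≃ₗ[k] (x ⟶ a) :=
  LinearEquiv.ofLinear (Linear.rightComp k x ((shiftFunctorZero A ℤ).hom.app a))
    (Linear.rightComp k x ((shiftFunctorZero A ℤ).inv.app a))
    (by ext f; simp) (by ext f; simp)

lemma homFunctor_finiteType
    (hft : ∀ a b : A, {p : ℤ | Nontrivial (a ⟶ b⟦p⟧)}.Finite ∧
      ∀ p : ℤ, FiniteDimensional k (a ⟶ b⟦p⟧)) (a : A) :
    FunctorFiniteType k B (homFunctor k j a) := by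
  intro b
  constructor
  · -- the set of `p` with `Hom(j (b⟦p⟧), a)` nontrivial is finite
    have hfin := (hft (j.obj b) a).1
    have : {p : ℤ | Nontrivial ((homFunctor k j a).obj (op (b⟦p⟧)))} ⊆
        Neg.neg ⁻¹' {p : ℤ | Nontrivial (j.obj b ⟶ a⟦p⟧)} := by
      intro p hp
      have hp' : Nontrivial (j.obj (b⟦p⟧) ⟶ a) := hp
      -- transport nontriviality along two bijections
      have e1 : (j.obj (b⟦p⟧) ⟶ a) ≃ ((j.obj b)⟦p⟧ ⟶ a) :=
        Iso.homCongr ((j.commShiftIso p).app b) (Iso.refl a)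
      have e2 : ((j.obj b)⟦p⟧ ⟶ a) ≃ (j.obj b ⟶ a⟦(-p)⟧) :=
        ((shiftEquiv A p).toAdjunction.homEquiv (j.obj b) a)
      exact (e2.symm.trans e1.symm).nontrivial
    exact Set.Finite.subset (hfin.preimage (neg_injective.injOn)) this
  · intro p
    have hfd : FiniteDimensional k (j.obj (b⟦p⟧) ⟶ a⟦(0:ℤ)⟧) := (hft (j.obj (b⟦p⟧)) a).2 0
    exact Module.Finite.equiv (homShiftZeroEquiv k (j.obj (b⟦p⟧)) a)

end Aux

theorem saturated_implies_right_admissible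
    {A : Type u} [Category.{v} A] [Preadditive A] [Linear k A]
    [Limits.HasZeroObject A] [HasShift A ℤ] [∀ n : ℤ, (shiftFunctor A n).Additive]
    [Pretriangulated A]
    -- `A` is of finite type
    (hft : ∀ a b : A, {p : ℤ | Nontrivial (a ⟶ b⟦p⟧)}.Finite ∧
      ∀ p : ℤ, FiniteDimensional k (a ⟶ b⟦p⟧))
    {B : Type u'} [Category.{v} B] [Preadditive B] [Linear k B]
    [Limits.HasZeroObject B] [HasShift B ℤ] [∀ n : ℤ, (shiftFunctor B n).Additive]
    [Pretriangulated B]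
    (j : B ⥤ A) [j.Full] [j.Faithful] [j.Additive] [j.Linear k]
    [j.CommShift ℤ] [j.IsTriangulated]
    (hsat : SaturatedCat k B) :
    ∃ R : A ⥤ B, Nonempty (j ⊣ R) := by
  have hrep : ∀ a : A, FunctorRepresentable k B (homFunctor k j a) := fun a =>
    hsat _ (homFunctor_additive k j a) (homFunctor_cohomological k j a)
      (homFunctor_finiteType k j hft a)
  choose Rob e hnat using hrep
  refine ⟨Adjunction.rightAdjointOfEquiv (F := j) (G_obj := Rob)
    (fun b a => (e a b).toEquiv) ?_, ⟨Adjunction.adjunctionOfEquivRight _ _⟩⟩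
  intro X' X Y f g
  exact hnat Y X X' f g
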